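/- Let n ∈ (0,2), θ = (1/π)·arccos(n/2), γ₊ = 2^{3/2}·cos(πθ/2), γ₋ = γ₊ − (2^{3/2}/θ)·sin(πθ/2), and let ρ be the spectral density defined in the context. Then ρ is continuous on the closed interval [γ₋, γ₊], strictly positive on the open interval (γ₋, γ₊), and satisfies ρ(γ₋) = 0 and ρ(γ₊) = 0. -/

import Mathlib

open Real MeasureTheory Filter Topology

/-- θ = (1/π)·arccos(n/2). -/
noncomputable def theta (n : ℝ) : ℝ := Real.arccos (n / 2) / π

/-- γ₊ = 2^{3/2}·cos(πθ/2). -/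
noncomputable def gammaP (n : ℝ) : ℝ := (2 : ℝ) ^ ((3 : ℝ) / 2) * Real.cos (π * theta n / 2)

/-- γ₋ = γ₊ − (2^{3/2}/θ)·sin(πθ/2). -/
noncomputable def gammaM (n : ℝ) : ℝ :=
  gammaP n - ((2 : ℝ) ^ ((3 : ℝ) / 2) / theta n) * Real.sin (π * theta n / 2)

/-- The spectral density ρ of the fully packed loop-O(n) model. -/
noncomputable def rho (n : ℝ) (y : ℝ) : ℝ :=
  ((2 : ℝ) ^ (-(theta n) - 1 / 2) / (π * theta n * (gammaP n - gammaM n))) *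
    (gammaP n - y) ^ (1 - theta n) *
    ((Real.sqrt (2 * gammaP n - gammaM n - y) + Real.sqrt (y - gammaM n)) ^ (2 * theta n) -
      (Real.sqrt (2 * gammaP n - gammaM n - y) - Real.sqrt (y - gammaM n)) ^ (2 * theta n))

/-- One-cut properties of the spectral density: ρ is continuous on [γ₋,γ₊],
strictly positive on (γ₋,γ₊), and vanishes at both endpoints. -/
theorem rho_one_cut_properties (n : ℝ) (hn : n ∈ Set.Ioo (0 : ℝ) 2) :
    ContinuousOn (rho n) (Set.Icc (gammaM n) (gammaP n)) ∧
    (∀ y ∈ Set.Ioo (gammaM n) (gammaP n), 0 < rho n y) ∧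
    rho n (gammaM n) = 0 ∧ rho n (gammaP n) = 0 := by
  obtain ⟨hn0, hn2⟩ := hn
  have hπ := Real.pi_pos
  have hθ0 : 0 < theta n := by
    unfold theta
    exact div_pos (Real.arccos_pos.2 (by linarith)) hπ
  have hθ2 : theta n < 1 / 2 := by
    unfold theta
    rw [div_lt_iff₀ hπ]
    have := Real.arccos_lt_pi_div_two.2 (show (0:ℝ) < n / 2 by linarith)
    linarith
  have hsin : 0 < Real.sin (π * theta n / 2) := by
    apply Real.sin_pos_of_pos_of_lt_pi
    · positivity
    · nlinarith
  have hpow : (0:ℝ) < (2 : ℝ) ^ ((3 : ℝ) / 2) :=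
    Real.rpow_pos_of_pos (by norm_num) _
  have hba : gammaM n < gammaP n := by
    unfold gammaM
    have : 0 < (2 : ℝ) ^ ((3 : ℝ) / 2) / theta n * Real.sin (π * theta n / 2) :=
      mul_pos (div_pos hpow hθ0) hsin
    linarith
  set a := gammaM n
  set b := gammaP n
  have hC : 0 < (2 : ℝ) ^ (-(theta n) - 1 / 2) / (π * theta n * (b - a)) := by
    apply div_pos (Real.rpow_pos_of_pos (by norm_num) _)
    have : 0 < b - a := by linarith
    positivity
  refine ⟨?_, ?_, ?_, ?_⟩
  · unfold rho
    apply ContinuousOn.mul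
    apply ContinuousOn.mul continuousOn_const
    · apply ContinuousOn.rpow_const (by fun_prop)
      intro x _; right; linarith
    · apply ContinuousOn.sub <;>
      · apply ContinuousOn.rpow_const (by fun_prop)
        intro x _; right; linarith
  · intro y hy
    obtain ⟨hya, hyb⟩ := hy
    unfold rho
    apply mul_pos (mul_pos hC (Real.rpow_pos_of_pos (by linarith) _))
    have h1 : 0 < y - a := by linarith
    have h2 : y - a < 2 * b - a - y := by linarith
    have hs2 : 0 < Real.sqrt (y - a) := Real.sqrt_pos.2 h1
    have hs12 : Real.sqrt (y - a) < Real.sqrt (2 * b - a - y) :=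
      Real.sqrt_lt_sqrt (le_of_lt h1) h2
    have hlt : Real.sqrt (2 * b - a - y) - Real.sqrt (y - a) <
        Real.sqrt (2 * b - a - y) + Real.sqrt (y - a) := by linarith
    have := Real.rpow_lt_rpow (by linarith) hlt (by linarith : 0 < 2 * theta n)
    linarith
  · unfold rho
    simp [a]
  · unfold rho
    rw [sub_self, Real.zero_rpow (by linarith)]
    ring
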